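/- For each k > 2, the point (1/k, 1/k²) is a singular point of the curve {b_k = 0}: both partial derivatives ∂b_k/∂x and ∂b_k/∂y vanish at (1/k, 1/k²), and b_k(1/k, 1/k²) = 0. -/

import Mathlib

/-- The defining polynomial `b_k` of the `k`-th boundary curve of planar
Vandermonde cells. -/
noncomputable def bCurve (k x y : ℝ) : ℝ :=
  x ^ 3 * (k ^ 3 - 4 * k ^ 2 + 4 * k) + y ^ 2 * (-k ^ 3 + k ^ 2) + x * y * (6 * k ^ 2 - 6 * k)
    + x ^ 2 * (-3 * k ^ 2 + 3 * k - 3) + 3 * k * x + y * (-4 * k + 4) - 1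

/-- For `k > 2`, the point `(1/k, 1/k²)` is a singular point of `{b_k = 0}`: the
polynomial and both partial derivatives vanish there. -/
theorem bCurve_singular_at_cusp (k : ℕ) (hk : 2 < k) :
    bCurve (k : ℝ) (1 / (k : ℝ)) (1 / (k : ℝ) ^ 2) = 0 ∧
    deriv (fun x : ℝ => bCurve (k : ℝ) x (1 / (k : ℝ) ^ 2)) (1 / (k : ℝ)) = 0 ∧
    deriv (fun y : ℝ => bCurve (k : ℝ) (1 / (k : ℝ)) y) (1 / (k : ℝ) ^ 2) = 0 := by
  have hk0 : (k : ℝ) ≠ 0 := by positivity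
  refine ⟨by unfold bCurve; field_simp; ring, ?_, ?_⟩
  · have hd : HasDerivAt (fun x : ℝ => bCurve (k : ℝ) x (1 / (k : ℝ) ^ 2))
        (3 * (1 / (k:ℝ)) ^ 2 * ((k:ℝ) ^ 3 - 4 * k ^ 2 + 4 * k)
          + (1 / (k:ℝ)^2) * (6 * (k:ℝ) ^ 2 - 6 * k)
          + 2 * (1 / (k:ℝ)) * (-3 * (k:ℝ) ^ 2 + 3 * k - 3) + 3 * k) (1 / (k:ℝ)) := by
      set x := 1 / (k:ℝ)
      have h1 := (hasDerivAt_pow 3 x).mul_const ((k:ℝ) ^ 3 - 4 * (k:ℝ) ^ 2 + 4 * k)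
      have h2 := h1.add_const ((1 / (k:ℝ)^2) ^ 2 * (-(k:ℝ) ^ 3 + (k:ℝ) ^ 2))
      have h3 := h2.add ((hasDerivAt_id x).mul_const ((1 / (k:ℝ)^2) * (6 * (k:ℝ) ^ 2 - 6 * k)))
      have h4 := h3.add ((hasDerivAt_pow 2 x).mul_const (-3 * (k:ℝ) ^ 2 + 3 * k - 3))
      have h5 := h4.add ((hasDerivAt_id x).const_mul (3 * (k:ℝ)))
      have h6 := (h5.add_const ((1 / (k:ℝ)^2) * (-4 * (k:ℝ) + 4))).sub_const 1
      simp only [id_eq] at h6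
      unfold bCurve
      refine (h6.congr_deriv ?_).congr_of_eventuallyEq (Filter.Eventually.of_forall fun z => ?_)
      · push_cast; ring
      · simp only [Pi.add_apply]; ring
    rw [hd.deriv]
    field_simp
    ring
  · have hd : HasDerivAt (fun y : ℝ => bCurve (k : ℝ) (1 / (k:ℝ)) y)
        (2 * (1 / (k:ℝ)^2) * (-(k:ℝ) ^ 3 + (k:ℝ) ^ 2) + (1 / (k:ℝ)) * (6 * (k:ℝ) ^ 2 - 6 * k)
          + (-4 * (k:ℝ) + 4)) (1 / (k:ℝ)^2) := by
      set y := 1 / (k:ℝ)^2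
      have h1 := (hasDerivAt_pow 2 y).mul_const (-(k:ℝ) ^ 3 + (k:ℝ) ^ 2)
      have h2 := h1.add ((hasDerivAt_id y).mul_const ((1 / (k:ℝ)) * (6 * (k:ℝ) ^ 2 - 6 * k)))
      have h3 := h2.add ((hasDerivAt_id y).mul_const (-4 * (k:ℝ) + 4))
      have h4 := h3.const_add ((1 / (k:ℝ)) ^ 3 * ((k:ℝ) ^ 3 - 4 * (k:ℝ) ^ 2 + 4 * k)
          + (1 / (k:ℝ)) ^ 2 * (-3 * (k:ℝ) ^ 2 + 3 * k - 3) + 3 * (k:ℝ) * (1 / (k:ℝ)))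
      have h5 := h4.sub_const 1
      simp only [id_eq] at h5
      unfold bCurve
      refine (h5.congr_deriv ?_).congr_of_eventuallyEq (Filter.Eventually.of_forall fun z => ?_)
      · push_cast; ring
      · simp only [Pi.add_apply]; ring
    rw [hd.deriv]
    field_simp
    ring
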